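/- Let Φ ∈ ℝ^{n×p}, α > 0, y ∈ ℝᵖ, v ∈ ℝⁿ with ‖v‖_∞ ≤ 1, and w* ∈ ℝᵖ with ‖w*‖₂ ≤ 1. Define μ̂ = yᵀΦᵀ(ΦΦᵀ + αIₙ)⁻¹v and σ̂ = √(yᵀ(ΦᵀΦ + αIₚ)⁻¹y). Then μ̂ − yᵀw* = yᵀ(ΦᵀΦ + αIₚ)⁻¹Φᵀ(v − Φw*) − α·yᵀ(ΦᵀΦ + αIₚ)⁻¹w*, and the second term is bounded in absolute value by √α · σ̂. -/

import Mathlib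

open Matrix

lemma aux_mulVec_dot {m k : ℕ} (A : Matrix (Fin m) (Fin k) ℝ) (a : Fin k → ℝ) (b : Fin m → ℝ) :
    (A *ᵥ a) ⬝ᵥ b = a ⬝ᵥ (Aᵀ *ᵥ b) := by
  rw [dotProduct_comm, dotProduct_mulVec, ← mulVec_transpose, dotProduct_comm]

lemma aux_cs {m : ℕ} (a b : Fin m → ℝ) :
    |a ⬝ᵥ b| ≤ Real.sqrt (a ⬝ᵥ a) * Real.sqrt (b ⬝ᵥ b) := by
  have h1 := Real.sum_mul_le_sqrt_mul_sqrt Finset.univ a b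
  have h2 := Real.sum_mul_le_sqrt_mul_sqrt Finset.univ (fun i => -a i) b
  simp only [dotProduct, ← sq] at *
  simp only [neg_mul, Finset.sum_neg_distrib, neg_sq] at h2
  rw [abs_le]
  constructor
  · nlinarith [h2]
  · simpa [sq] using h1

lemma aux_dot_self_nonneg {m : ℕ} (a : Fin m → ℝ) : 0 ≤ a ⬝ᵥ a :=
  Finset.sum_nonneg fun _ _ => mul_self_nonneg _

lemma aux_posdef {p n : ℕ} (Φ : Matrix (Fin n) (Fin p) ℝ) {α : ℝ} (hα : 0 < α) :
    (Φᵀ * Φ + α • (1 : Matrix (Fin p) (Fin p) ℝ)).PosDef := by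
  have h1 : (Φᵀ * Φ : Matrix (Fin p) (Fin p) ℝ).PosSemidef := by
    simpa using Matrix.posSemidef_conjTranspose_mul_self Φ
  have h2 : (α • (1 : Matrix (Fin p) (Fin p) ℝ)).PosDef := by
    rw [smul_one_eq_diagonal]
    exact Matrix.posDef_diagonal_iff.mpr fun _ => hα
  exact Matrix.PosDef.posSemidef_add h1 h2

lemma aux_push {p n : ℕ} (Φ : Matrix (Fin n) (Fin p) ℝ) {α : ℝ} (hα : 0 < α) :
    Φᵀ * (Φ * Φᵀ + α • (1 : Matrix (Fin n) (Fin n) ℝ))⁻¹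
      = (Φᵀ * Φ + α • (1 : Matrix (Fin p) (Fin p) ℝ))⁻¹ * Φᵀ := by
  set B := Φᵀ * Φ + α • (1 : Matrix (Fin p) (Fin p) ℝ) with hBdef
  set C := Φ * Φᵀ + α • (1 : Matrix (Fin n) (Fin n) ℝ) with hCdef
  have hB : B.PosDef := aux_posdef Φ hα
  have hC : C.PosDef := by
    have := aux_posdef Φᵀ hα
    simpa using this
  have hBu : IsUnit B.det := isUnit_iff_ne_zero.mpr hB.det_pos.ne'
  have hCu : IsUnit C.det := isUnit_iff_ne_zero.mpr hC.det_pos.ne'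
  have hcomm : B * Φᵀ = Φᵀ * C := by
    simp [hBdef, hCdef, Matrix.add_mul, Matrix.mul_add, Matrix.smul_mul, Matrix.mul_smul,
      Matrix.mul_assoc]
  calc Φᵀ * C⁻¹ = B⁻¹ * (B * Φᵀ) * C⁻¹ := by
        rw [← Matrix.mul_assoc, Matrix.nonsing_inv_mul B hBu, Matrix.one_mul]
    _ = B⁻¹ * Φᵀ * (C * C⁻¹) := by rw [hcomm]; simp [Matrix.mul_assoc]
    _ = B⁻¹ * Φᵀ := by rw [Matrix.mul_nonsing_inv C hCu, Matrix.mul_one]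

theorem stmt_14 (n p : ℕ) (Φ : Matrix (Fin n) (Fin p) ℝ) (α : ℝ) (hα : 0 < α)
    (y w : Fin p → ℝ) (v : Fin n → ℝ)
    (hv : ∀ i, |v i| ≤ 1) (hw : Real.sqrt (w ⬝ᵥ w) ≤ 1) :
    ((Φ *ᵥ y) ⬝ᵥ ((Φ * Φᵀ + α • (1 : Matrix (Fin n) (Fin n) ℝ))⁻¹ *ᵥ v) - y ⬝ᵥ w
        = y ⬝ᵥ ((Φᵀ * Φ + α • (1 : Matrix (Fin p) (Fin p) ℝ))⁻¹ *ᵥ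
            (Φᵀ *ᵥ (v - Φ *ᵥ w)))
          - α * (y ⬝ᵥ ((Φᵀ * Φ + α • (1 : Matrix (Fin p) (Fin p) ℝ))⁻¹ *ᵥ w))) ∧
    |α * (y ⬝ᵥ ((Φᵀ * Φ + α • (1 : Matrix (Fin p) (Fin p) ℝ))⁻¹ *ᵥ w))|
        ≤ Real.sqrt α *
          Real.sqrt (y ⬝ᵥ ((Φᵀ * Φ + α • (1 : Matrix (Fin p) (Fin p) ℝ))⁻¹ *ᵥ y)) := by
  set B := Φᵀ * Φ + α • (1 : Matrix (Fin p) (Fin p) ℝ) with hBdef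
  set C := Φ * Φᵀ + α • (1 : Matrix (Fin n) (Fin n) ℝ) with hCdef
  have hB : B.PosDef := aux_posdef Φ hα
  have hBu : IsUnit B.det := isUnit_iff_ne_zero.mpr hB.det_pos.ne'
  constructor
  · -- the identity
    have hterm1 : (Φ *ᵥ y) ⬝ᵥ (C⁻¹ *ᵥ v) = y ⬝ᵥ (B⁻¹ *ᵥ (Φᵀ *ᵥ v)) := by
      rw [aux_mulVec_dot, Matrix.mulVec_mulVec, aux_push Φ hα, ← Matrix.mulVec_mulVec]
    have hw' : y ⬝ᵥ w = y ⬝ᵥ (B⁻¹ *ᵥ (Φᵀ *ᵥ (Φ *ᵥ w))) + α * (y ⬝ᵥ (B⁻¹ *ᵥ w)) := by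
      have : w = B⁻¹ *ᵥ (B *ᵥ w) := by
        rw [Matrix.mulVec_mulVec, Matrix.nonsing_inv_mul B hBu, Matrix.one_mulVec]
      conv_lhs => rw [this]
      rw [hBdef]
      rw [Matrix.add_mulVec, Matrix.smul_mulVec, Matrix.one_mulVec,
        ← Matrix.mulVec_mulVec, Matrix.mulVec_add, Matrix.mulVec_smul,
        dotProduct_add, dotProduct_smul, smul_eq_mul]
    rw [hterm1, hw', Matrix.mulVec_sub, Matrix.mulVec_sub, dotProduct_sub]
    ring
  · -- the bound
    have hA : (B⁻¹).PosSemidef := hB.inv.posSemidef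
    open scoped MatrixOrder in obtain ⟨L, hL⟩ := CStarAlgebra.nonneg_iff_eq_star_mul_self.mp hA.nonneg
    have hL' : B⁻¹ = Lᵀ * L := by rw [hL]; rfl
    have key : ∀ a b : Fin p → ℝ, a ⬝ᵥ (B⁻¹ *ᵥ b) = (L *ᵥ a) ⬝ᵥ (L *ᵥ b) := by
      intro a b
      rw [hL', ← Matrix.mulVec_mulVec, aux_mulVec_dot]
    -- Cauchy-Schwarz
    have hcs : |y ⬝ᵥ (B⁻¹ *ᵥ w)| ≤
        Real.sqrt (y ⬝ᵥ (B⁻¹ *ᵥ y)) * Real.sqrt (w ⬝ᵥ (B⁻¹ *ᵥ w)) := by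
      rw [key, key, key]
      exact aux_cs _ _
    -- bound w ⬝ᵥ B⁻¹ w
    have hbd : w ⬝ᵥ (B⁻¹ *ᵥ w) ≤ α⁻¹ * (w ⬝ᵥ w) := by
      set u := B⁻¹ *ᵥ w with hudef
      have hwu : w = B *ᵥ u := by
        rw [hudef, Matrix.mulVec_mulVec, Matrix.mul_nonsing_inv B hBu, Matrix.one_mulVec]
      have hBu' : B *ᵥ u = Φᵀ *ᵥ (Φ *ᵥ u) + α • u := by
        rw [hBdef, Matrix.add_mulVec, Matrix.smul_mulVec, Matrix.one_mulVec,
          ← Matrix.mulVec_mulVec]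
      set s := (Φ *ᵥ u) ⬝ᵥ (Φ *ᵥ u) with hsdef
      have hs : 0 ≤ s := aux_dot_self_nonneg _
      have hMu : (Φᵀ *ᵥ (Φ *ᵥ u)) ⬝ᵥ u = s := by
        rw [aux_mulVec_dot, Matrix.transpose_transpose, dotProduct_comm]
      have hMu2 : u ⬝ᵥ (Φᵀ *ᵥ (Φ *ᵥ u)) = s := by rw [dotProduct_comm]; exact hMu
      have hq : 0 ≤ (Φᵀ *ᵥ (Φ *ᵥ u)) ⬝ᵥ (Φᵀ *ᵥ (Φ *ᵥ u)) := aux_dot_self_nonneg _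
      have hr : 0 ≤ u ⬝ᵥ u := aux_dot_self_nonneg _
      have hlhs : w ⬝ᵥ u = s + α * (u ⬝ᵥ u) := by
        conv_lhs => rw [hwu, hBu']
        rw [add_dotProduct, hMu]
        rw [smul_dotProduct, smul_eq_mul]
      have hrhs : w ⬝ᵥ w = (Φᵀ *ᵥ (Φ *ᵥ u)) ⬝ᵥ (Φᵀ *ᵥ (Φ *ᵥ u)) + 2 * α * s
          + α ^ 2 * (u ⬝ᵥ u) := by
        conv_lhs => rw [hwu, hBu']
        simp only [add_dotProduct, dotProduct_add, dotProduct_smul, smul_dotProduct,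
          smul_eq_mul, hMu, hMu2]
        ring
      have hmain : α * (w ⬝ᵥ u) ≤ w ⬝ᵥ w := by
        rw [hlhs, hrhs]; nlinarith
      have : w ⬝ᵥ u = w ⬝ᵥ (B⁻¹ *ᵥ w) := by rw [hudef]
      rw [← this]
      have h2 := mul_le_mul_of_nonneg_left hmain (inv_pos.mpr hα).le
      rwa [← mul_assoc, inv_mul_cancel₀ hα.ne', one_mul] at h2
    have hAy : 0 ≤ y ⬝ᵥ (B⁻¹ *ᵥ y) := by rw [key]; exact aux_dot_self_nonneg _
    have hAw : 0 ≤ w ⬝ᵥ (B⁻¹ *ᵥ w) := by rw [key]; exact aux_dot_self_nonneg _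
    have hsqrtw : Real.sqrt (w ⬝ᵥ (B⁻¹ *ᵥ w)) ≤ (Real.sqrt α)⁻¹ := by
      calc Real.sqrt (w ⬝ᵥ (B⁻¹ *ᵥ w)) ≤ Real.sqrt (α⁻¹ * (w ⬝ᵥ w)) :=
            Real.sqrt_le_sqrt hbd
        _ = (Real.sqrt α)⁻¹ * Real.sqrt (w ⬝ᵥ w) := by
            rw [Real.sqrt_mul (by positivity), Real.sqrt_inv]
        _ ≤ (Real.sqrt α)⁻¹ * 1 := by
            gcongr
        _ = (Real.sqrt α)⁻¹ := mul_one _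
    have hsα : 0 < Real.sqrt α := Real.sqrt_pos.mpr hα
    calc |α * (y ⬝ᵥ (B⁻¹ *ᵥ w))| = α * |y ⬝ᵥ (B⁻¹ *ᵥ w)| := by
          rw [abs_mul, abs_of_pos hα]
      _ ≤ α * (Real.sqrt (y ⬝ᵥ (B⁻¹ *ᵥ y)) * Real.sqrt (w ⬝ᵥ (B⁻¹ *ᵥ w))) := by
          gcongr
      _ ≤ α * (Real.sqrt (y ⬝ᵥ (B⁻¹ *ᵥ y)) * (Real.sqrt α)⁻¹) := by
          gcongr
      _ = Real.sqrt α * Real.sqrt (y ⬝ᵥ (B⁻¹ *ᵥ y)) := by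
          have hh : α * (Real.sqrt α)⁻¹ = Real.sqrt α := by
            rw [← div_eq_mul_inv]; exact Real.div_sqrt
          calc α * (Real.sqrt (y ⬝ᵥ (B⁻¹ *ᵥ y)) * (Real.sqrt α)⁻¹)
              = (α * (Real.sqrt α)⁻¹) * Real.sqrt (y ⬝ᵥ (B⁻¹ *ᵥ y)) := by ring
            _ = Real.sqrt α * Real.sqrt (y ⬝ᵥ (B⁻¹ *ᵥ y)) := by rw [hh]
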